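/- Let A be as above. If N ≥ 2b - 2 and 0 ≤ n ≤ Nb with n ∉ E(A) ∪ (Nb - E(b-A)), then n ∈ NA. -/

import Mathlib

/-- The `N`-fold sumset of a set of integers. -/
def nfold (A : Set ℤ) (N : ℕ) : Set ℤ :=
  {x | ∃ f : Fin N → ℤ, (∀ i, f i ∈ A) ∧ ∑ i, f i = x}

/-- Nonnegative integer combinations of the elements of a finite set of integers. -/
def combos (A : Finset ℤ) : Set ℤ :=
  {n | ∃ c : ℤ → ℕ, ∑ a ∈ A, (c a : ℤ) * a = n}

/-- The exceptional set: nonnegative integers not representable. -/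
def excep (A : Finset ℤ) : Set ℤ :=
  {n | 0 ≤ n ∧ n ∉ combos A}

lemma multiset_to_nfold (A : Set ℤ) : ∀ (N : ℕ) (n : ℤ) (m : Multiset ℤ),
    Multiset.card m = N → (∀ x ∈ m, x ∈ A) → m.sum = n → n ∈ nfold A N := by
  intro N
  induction N with
  | zero =>
    intro n m hcard _ hsum
    rw [Multiset.card_eq_zero] at hcard
    subst hcard
    exact ⟨fun _ => 0, fun i => i.elim0, by simpa using hsum⟩
  | succ N ih =>
    intro n m hcard hmem hsum
    have hpos : 0 < Multiset.card m := by omega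
    rw [Multiset.card_pos_iff_exists_mem] at hpos
    obtain ⟨a, ha⟩ := hpos
    obtain ⟨t, rfl⟩ := Multiset.exists_cons_of_mem ha
    obtain ⟨f, hf, hfs⟩ := ih (t.sum) t (by simpa using hcard)
      (fun x hx => hmem x (Multiset.mem_cons_of_mem hx)) rfl
    refine ⟨Fin.cons a f, ?_, ?_⟩
    · intro i
      refine Fin.cases ?_ ?_ i
      · exact hmem a (Multiset.mem_cons_self a t)
      · intro j; simpa using hf j
    · rw [Fin.sum_cons, hfs, ← hsum, Multiset.sum_cons]

/-- Pigeonhole: a multiset of at least `b` elements in `[1, b-1]` has a nonempty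
sub-multiset whose sum is `k*b` with more than `k` elements. -/
lemma exists_sub (b : ℤ) (hb1 : 1 ≤ b) (l : Multiset ℤ)
    (hl : ∀ x ∈ l, 1 ≤ x ∧ x ≤ b - 1) (hcard : b ≤ (Multiset.card l : ℤ)) :
    ∃ u : Multiset ℤ, u ≤ l ∧ ∃ k : ℕ, u.sum = (k : ℤ) * b ∧ k < Multiset.card u := by
  have hb : 2 ≤ b := by
    have h1 : (0:ℤ) < (Multiset.card l : ℤ) := lt_of_lt_of_le hb1 hcard
    have h2 : 0 < Multiset.card l := by exact_mod_cast h1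
    rw [Multiset.card_pos_iff_exists_mem] at h2
    obtain ⟨x, hx⟩ := h2
    have := hl x hx
    omega
  set L := l.toList with hL
  have hLl : (L : Multiset ℤ) = l := Multiset.coe_toList l
  have hLlen : b ≤ (L.length : ℤ) := by
    rwa [← Multiset.coe_card, hLl]
  set β := b.toNat with hβ
  have hβb : (β : ℤ) = b := Int.toNat_of_nonneg (by omega)
  -- prefix sums mod b
  have pigeonhole : ∃ i ∈ Finset.range (β + 1), ∃ j ∈ Finset.range (β + 1), i ≠ j ∧
      ((L.take i).sum % b) = ((L.take j).sum % b) := by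
    apply Finset.exists_ne_map_eq_of_card_lt_of_maps_to (t := Finset.Ico (0:ℤ) b)
    · rw [Int.card_Ico, Finset.card_range]
      omega
    · intro i _
      rw [Finset.mem_coe, Finset.mem_Ico]
      exact ⟨Int.emod_nonneg _ (by omega), Int.emod_lt_of_pos _ (by omega)⟩
  obtain ⟨i, hi, j, hj, hij, hmod⟩ := pigeonhole
  rw [Finset.mem_range] at hi hj
  -- wlog i < j
  wlog hlt : i < j generalizing i j
  · exact this j hj i hi hij.symm hmod.symm (by omega)
  set d := j - i with hd
  set u : Multiset ℤ := (↑((L.drop i).take d) : Multiset ℤ) with hu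
  have hdj : i + d = j := by omega
  have htake : L.take j = L.take i ++ (L.drop i).take d := by
    rw [← hdj, List.take_add]
  have hule : u ≤ l := by
    rw [← hLl, hu, Multiset.coe_le]
    apply List.Sublist.subperm
    have h1 : ((L.drop i).take d).Sublist (L.take j) := by
      rw [htake]; exact List.sublist_append_right _ _
    exact h1.trans (List.take_sublist _ _)
  have hucard : Multiset.card u = d := by
    rw [hu, Multiset.coe_card, List.length_take, List.length_drop]
    omega
  have husum : u.sum = (L.take j).sum - (L.take i).sum := by
    rw [hu, Multiset.sum_coe, htake, List.sum_append]; ring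
  have hdvd : b ∣ u.sum := by
    rw [husum, Int.dvd_iff_emod_eq_zero, Int.sub_emod, hmod]
    simp
  -- elements of u are in [1, b-1]
  have humem : ∀ x ∈ u, 1 ≤ x ∧ x ≤ b - 1 := fun x hx => hl x (Multiset.mem_of_le hule hx)
  have hlow : (d : ℤ) ≤ u.sum := by
    have := Multiset.card_nsmul_le_sum (s := u) (a := (1:ℤ)) (fun x hx => (humem x hx).1)
    rw [hucard] at this
    simpa using this
  have hhigh : u.sum ≤ (d : ℤ) * (b - 1) := by
    have := Multiset.sum_le_card_nsmul u (b - 1) (fun x hx => (humem x hx).2)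
    rw [hucard] at this
    simpa [nsmul_eq_mul] using this
  have hd1 : 1 ≤ d := by omega
  obtain ⟨K, hK⟩ := hdvd
  have hK0 : 0 < K := by nlinarith [hd1]
  have hKd : K < (d : ℤ) := by nlinarith
  refine ⟨u, hule, K.toNat, ?_, ?_⟩
  · rw [hK, Int.toNat_of_nonneg (by omega)]; ring
  · rw [hucard]; omega

/-- Any multiset of positive elements of `A` can be replaced by one with the same sum
whose non-`b` elements number at most `b - 1`. -/
lemma reduce (A : Finset ℤ) (b : ℤ) (hbA : b ∈ A) (hb1 : 1 ≤ b) :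
    ∀ (s : ℕ) (m : Multiset ℤ), Multiset.card m = s → (∀ x ∈ m, x ∈ A ∧ 1 ≤ x ∧ x ≤ b) →
    ∃ m' : Multiset ℤ, (∀ x ∈ m', x ∈ A ∧ 1 ≤ x ∧ x ≤ b) ∧ m'.sum = m.sum ∧
      ((Multiset.card (Multiset.filter (fun x => ¬ x = b) m') : ℤ) ≤ b - 1) := by
  intro s
  induction s using Nat.strong_induction_on with
  | _ s ih =>
    intro m hcard hmem
    set l := Multiset.filter (fun x => ¬ x = b) m with hl
    by_cases hsmall : (Multiset.card l : ℤ) ≤ b - 1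
    · exact ⟨m, hmem, rfl, hsmall⟩
    · push_neg at hsmall
      have hlcard : b ≤ (Multiset.card l : ℤ) := by omega
      have hlmem : ∀ x ∈ l, 1 ≤ x ∧ x ≤ b - 1 := by
        intro x hx
        rw [hl, Multiset.mem_filter] at hx
        have := hmem x hx.1
        have := hx.2
        constructor <;> omega
      obtain ⟨u, hul, k, hksum, hkcard⟩ := exists_sub b hb1 l hlmem hlcard
      have hum : u ≤ m := le_trans hul (Multiset.filter_le _ m)
      set m'' := (m - u) + Multiset.replicate k b with hm''
      have hrestore : (m - u) + u = m := tsub_add_cancel_of_le hum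
      have hsum'' : m''.sum = m.sum := by
        have h5 : (m - u).sum + u.sum = m.sum := by rw [← Multiset.sum_add, hrestore]
        rw [hm'', Multiset.sum_add, Multiset.sum_replicate, nsmul_eq_mul, ← hksum]
        omega
      have hcard'' : Multiset.card m'' < s := by
        have h1 : Multiset.card (m - u) + Multiset.card u = Multiset.card m := by
          rw [← Multiset.card_add, hrestore]
        have h2 : Multiset.card m'' = Multiset.card (m - u) + k := by
          rw [hm'', Multiset.card_add, Multiset.card_replicate]
        omega
      have hmem'' : ∀ x ∈ m'', x ∈ A ∧ 1 ≤ x ∧ x ≤ b := by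
        intro x hx
        rw [hm'', Multiset.mem_add] at hx
        rcases hx with hx | hx
        · exact hmem x (Multiset.mem_of_le (Multiset.sub_le_self _ _) hx)
        · rw [Multiset.eq_of_mem_replicate hx]
          exact ⟨hbA, hb1, le_refl b⟩
      obtain ⟨m', h1, h2, h3⟩ := ih _ hcard'' m'' rfl hmem''
      exact ⟨m', h1, h2.trans hsum'', h3⟩

lemma combos_rep (A : Finset ℤ) (b : ℤ) (h0 : 0 ∈ A) (hbA : b ∈ A) (hb1 : 1 ≤ b)
    (hbound : ∀ x ∈ A, 0 ≤ x ∧ x ≤ b) (N : ℕ) (hN : 2 * b - 2 ≤ (N : ℤ))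
    (n : ℤ) (hc : n ∈ combos A) (h2 : 2 * n ≤ (N : ℤ) * b) :
    n ∈ nfold (↑A) N := by
  obtain ⟨c, hcsum⟩ := hc
  set m₀ : Multiset ℤ := ∑ a ∈ A.filter (fun a => ¬ a = 0), Multiset.replicate (c a) a with hm₀
  have hm₀sum : m₀.sum = n := by
    rw [hm₀, Multiset.sum_sum]
    rw [← hcsum, ← Finset.sum_filter_add_sum_filter_not A (fun a => ¬ a = 0)]
    have h1 : ∑ a ∈ A.filter (fun a => ¬¬ a = 0), (c a : ℤ) * a = 0 := by
      apply Finset.sum_eq_zero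
      intro a ha
      rw [Finset.mem_filter] at ha
      have : a = 0 := by simpa using ha.2
      simp [this]
    rw [h1, add_zero]
    apply Finset.sum_congr rfl
    intro a _
    rw [Multiset.sum_replicate, nsmul_eq_mul]
  have hm₀mem : ∀ x ∈ m₀, x ∈ A ∧ 1 ≤ x ∧ x ≤ b := by
    intro x hx
    rw [hm₀, Multiset.mem_sum] at hx
    obtain ⟨a, ha, hxa⟩ := hx
    rw [Finset.mem_filter] at ha
    rw [Multiset.eq_of_mem_replicate hxa]
    have := hbound a ha.1
    have ha2 : ¬ a = 0 := by simpa using ha.2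
    exact ⟨ha.1, by omega, this.2⟩
  obtain ⟨m', hmem', hsum', hsmall'⟩ := reduce A b hbA hb1 (Multiset.card m₀) m₀ rfl hm₀mem
  rw [hm₀sum] at hsum'
  -- count the b's and the small elements
  set K := Multiset.card (Multiset.filter (fun x => x = b) m') with hK
  set T := Multiset.card (Multiset.filter (fun x => ¬ x = b) m') with hT
  have hsplit : K + T = Multiset.card m' := by
    rw [hK, hT, ← Multiset.card_add, Multiset.filter_add_not]
  have hKb : (K : ℤ) * b ≤ n := by
    have h1 : (Multiset.filter (fun x => x = b) m').sum = (K : ℤ) * b := by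
      have hall : ∀ x ∈ Multiset.filter (fun x => x = b) m', x = b :=
        fun x hx => (Multiset.mem_filter.mp hx).2
      have hup := Multiset.sum_le_card_nsmul (Multiset.filter (fun x => x = b) m') b
        (fun x hx => le_of_eq (hall x hx))
      have hlo := Multiset.card_nsmul_le_sum (s := Multiset.filter (fun x => x = b) m') (a := b)
        (fun x hx => (hall x hx).symm.le)
      rw [le_antisymm hup hlo, ← hK, nsmul_eq_mul]
    have h3 : 0 ≤ (Multiset.filter (fun x => ¬ x = b) m').sum := by
      apply Multiset.sum_nonneg
      intro x hx
      have := hmem' x (Multiset.mem_of_le (Multiset.filter_le _ _) hx)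
      omega
    have h4 : (Multiset.filter (fun x => x = b) m').sum
        + (Multiset.filter (fun x => ¬ x = b) m').sum = n := by
      rw [← Multiset.sum_add, Multiset.filter_add_not, hsum']
    linarith
  have hcardN : Multiset.card m' ≤ N := by
    have h2K : 2 * (K : ℤ) ≤ (N : ℤ) := by nlinarith
    have : 2 * ((K : ℤ) + (T : ℤ)) ≤ 2 * (N : ℤ) := by omega
    omega
  -- pad with zeros
  apply multiset_to_nfold (↑A) N n (m' + Multiset.replicate (N - Multiset.card m') 0)
  · rw [Multiset.card_add, Multiset.card_replicate]; omega
  · intro x hx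
    rw [Multiset.mem_add] at hx
    rcases hx with hx | hx
    · exact (hmem' x hx).1
    · rw [Multiset.eq_of_mem_replicate hx]; exact h0
  · rw [Multiset.sum_add, Multiset.sum_replicate, hsum']
    simp

/-- If `N ≥ 2b - 2` and `0 ≤ n ≤ N*b` with
`n ∉ E(A) ∪ (N*b - E(b-A))`, then `n ∈ NA`. -/
theorem stmt10 (A : Finset ℤ) (b : ℤ) (h0 : 0 ∈ A) (hb : b ∈ A)
    (hbound : ∀ x ∈ A, 0 ≤ x ∧ x ≤ b) (hgcd : A.gcd id = 1)
    (N : ℕ) (hN : 2 * b - 2 ≤ (N : ℤ))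
    (n : ℤ) (hn0 : 0 ≤ n) (hnN : n ≤ (N : ℤ) * b)
    (hnE : n ∉ excep A)
    (hnE' : n ∉ (fun e => (N : ℤ) * b - e) '' excep (A.image (fun a => b - a))) :
    n ∈ nfold (↑A) N := by
  have hb0 : 0 ≤ b := (hbound b hb).1
  have hb1 : 1 ≤ b := by
    rcases lt_or_eq_of_le hb0 with h | h
    · omega
    · exfalso
      have : A.gcd id = 0 := by
        rw [Finset.gcd_eq_zero_iff]
        intro x hx
        have := hbound x hx
        simp only [id]
        omega
      omega
  by_cases hcase : 2 * n ≤ (N : ℤ) * b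
  · -- use representation of n by A
    have hcomb : n ∈ combos A := by
      by_contra h
      exact hnE ⟨hn0, h⟩
    exact combos_rep A b h0 hb hb1 hbound N hN n hcomb hcase
  · -- use representation of N*b - n by b - A
    push_neg at hcase
    set A' := A.image (fun a => b - a) with hA'
    set m := (N : ℤ) * b - n with hm
    have h0' : (0 : ℤ) ∈ A' := Finset.mem_image.mpr ⟨b, hb, by ring⟩
    have hb' : b ∈ A' := Finset.mem_image.mpr ⟨0, h0, by ring⟩
    have hbound' : ∀ x ∈ A', 0 ≤ x ∧ x ≤ b := by
      intro x hx
      obtain ⟨a, ha, rfl⟩ := Finset.mem_image.mp hx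
      have := hbound a ha
      omega
    have hm0 : 0 ≤ m := by omega
    have hm2 : 2 * m ≤ (N : ℤ) * b := by omega
    have hcomb : m ∈ combos A' := by
      by_contra h
      exact hnE' ⟨m, ⟨hm0, h⟩, show (N:ℤ) * b - m = n by omega⟩
    obtain ⟨f, hf, hfs⟩ := combos_rep A' b h0' hb' hb1 hbound' N hN m hcomb hm2
    refine ⟨fun i => b - f i, ?_, ?_⟩
    · intro i
      obtain ⟨a, ha, hfa⟩ := Finset.mem_image.mp (hf i)
      have : b - f i = a := by omega
      show b - f i ∈ (↑A : Set ℤ)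
      rw [this]
      exact ha
    · rw [Finset.sum_sub_distrib, hfs, Finset.sum_const, Finset.card_univ, Fintype.card_fin,
        nsmul_eq_mul]
      omega
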